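/- In the subspace-constrained sketch-and-project setting, let P := I − (Q A B^{−1/2})† Q A B^{−1/2}, Z := P B^{−1/2} Aᵀ Sᵀ (S A B^{−1/2} P B^{−1/2} Aᵀ Sᵀ)† S A B^{−1/2} P, and Z̃ := B^{−1/2} Aᵀ Sᵀ (S A B^{−1} Aᵀ Sᵀ)† S A B^{−1/2} (the projector of the unconstrained sketch-and-project method with the same sketching matrix S). Then for every vector y ∈ range(P B^{−1/2} Aᵀ), one has ||Z y||₂ ≥ ||Z̃ y||₂; in particular the per-iteration error decrease with the subspace constraint is at least as large as without it: ||Z B^{1/2}(x^k − x*)||₂ ≥ ||Z̃ B^{1/2}(x^k − x*)||₂. -/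

import Mathlib

open Matrix

/-- `Mp` is the Moore–Penrose pseudoinverse of `M` (the four Penrose conditions,
which characterize it uniquely). -/
def IsMoorePenrose {k l : Type*} [Fintype k] [Fintype l]
    (M : Matrix k l ℝ) (Mp : Matrix l k ℝ) : Prop :=
  M * Mp * M = M ∧ Mp * M * Mp = Mp ∧ (M * Mp)ᵀ = M * Mp ∧ (Mp * M)ᵀ = Mp * M

/-- The square root of a positive semidefinite matrix, as `Matrix.PosSemidef.sqrt` was defined
in the older Mathlib (removed since). -/
noncomputable def Matrix.PosSemidef.sqrt {n : Type*} [Fintype n] [DecidableEq n]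
    {A : Matrix n n ℝ} (hA : A.PosSemidef) : Matrix n n ℝ :=
  hA.1.eigenvectorUnitary.1 * diagonal ((↑) ∘ (Real.sqrt ∘ hA.1.eigenvalues)) *
    (star hA.1.eigenvectorUnitary : Matrix n n ℝ)

lemma psd_sqrt_transpose {n : Type*} [Fintype n] [DecidableEq n]
    {A : Matrix n n ℝ} (hA : A.PosSemidef) : (Matrix.PosSemidef.sqrt hA)ᵀ = Matrix.PosSemidef.sqrt hA := by
  unfold Matrix.PosSemidef.sqrt
  rw [Matrix.transpose_mul, Matrix.transpose_mul, Matrix.diagonal_transpose, ← Matrix.mul_assoc]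
  congr 1

lemma psd_sqrt_mul_self {n : Type*} [Fintype n] [DecidableEq n]
    {A : Matrix n n ℝ} (hA : A.PosSemidef) : Matrix.PosSemidef.sqrt hA * Matrix.PosSemidef.sqrt hA = A := by
  unfold Matrix.PosSemidef.sqrt
  conv_rhs => rw [hA.1.spectral_theorem, Unitary.conjStarAlgAut_apply]
  have hu : (star hA.1.eigenvectorUnitary : Matrix n n ℝ) * hA.1.eigenvectorUnitary.1 = 1 :=
    Unitary.coe_star_mul_self _
  have hd : diagonal ((↑) ∘ (Real.sqrt ∘ hA.1.eigenvalues)) * diagonal ((↑) ∘ (Real.sqrt ∘ hA.1.eigenvalues))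
      = (diagonal (RCLike.ofReal ∘ hA.1.eigenvalues) : Matrix n n ℝ) := by
    rw [diagonal_mul_diagonal]; congr 1; funext i
    simp [Real.mul_self_sqrt (hA.eigenvalues_nonneg i)]
  calc _ = hA.1.eigenvectorUnitary.1 * diagonal ((↑) ∘ (Real.sqrt ∘ hA.1.eigenvalues)) *
      ((star hA.1.eigenvectorUnitary : Matrix n n ℝ) * hA.1.eigenvectorUnitary.1) *
      diagonal ((↑) ∘ (Real.sqrt ∘ hA.1.eigenvalues)) * (star hA.1.eigenvectorUnitary : Matrix n n ℝ) := by
        simp only [Matrix.mul_assoc]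
    _ = _ := by rw [hu, Matrix.mul_one, Matrix.mul_assoc _ (diagonal _) (diagonal _), hd]

lemma tmse_zero {k j : Type*} [Fintype k] [Fintype j] {E : Matrix k j ℝ}
    (h : Eᵀ * E = 0) : E = 0 := by
  have ht : Eᴴ = Eᵀ := by ext i j; simp [Matrix.conjTranspose_apply]
  exact Matrix.conjTranspose_mul_self_eq_zero.mp (by rw [ht, h])

lemma mp_transpose {k j : Type*} [Fintype k] [Fintype j] {M : Matrix k j ℝ} {Mp : Matrix j k ℝ}
    (h : IsMoorePenrose M Mp) : IsMoorePenrose Mᵀ Mpᵀ := by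
  obtain ⟨h1, h2, h3, h4⟩ := h
  refine ⟨?_, ?_, ?_, ?_⟩
  · calc Mᵀ * Mpᵀ * Mᵀ = (M * Mp * M)ᵀ := by simp [Matrix.transpose_mul, Matrix.mul_assoc]
    _ = Mᵀ := by rw [h1]
  · calc Mpᵀ * Mᵀ * Mpᵀ = (Mp * M * Mp)ᵀ := by simp [Matrix.transpose_mul, Matrix.mul_assoc]
    _ = Mpᵀ := by rw [h2]
  · have e : Mᵀ * Mpᵀ = (Mp * M)ᵀ := by simp [Matrix.transpose_mul]
    rw [e, Matrix.transpose_transpose]; exact h4.symm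
  · have e : Mpᵀ * Mᵀ = (M * Mp)ᵀ := by simp [Matrix.transpose_mul]
    rw [e, Matrix.transpose_transpose]; exact h3.symm

lemma mp_unique {k j : Type*} [Fintype k] [Fintype j] {M : Matrix k j ℝ} {X Y : Matrix j k ℝ}
    (hX : IsMoorePenrose M X) (hY : IsMoorePenrose M Y) : X = Y := by
  obtain ⟨hX1, hX2, hX3, hX4⟩ := hX
  obtain ⟨hY1, hY2, hY3, hY4⟩ := hY
  have hMX : M * X = M * Y := by
    calc M * X = (M * X)ᵀ := hX3.symm
    _ = Xᵀ * Mᵀ := by simp [Matrix.transpose_mul]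
    _ = Xᵀ * (M * Y * M)ᵀ := by rw [hY1]
    _ = Xᵀ * (Mᵀ * (M * Y)ᵀ) := by simp [Matrix.transpose_mul, Matrix.mul_assoc]
    _ = (M * X)ᵀ * (M * Y)ᵀ := by simp [Matrix.transpose_mul, Matrix.mul_assoc]
    _ = (M * X) * (M * Y) := by rw [hX3, hY3]
    _ = (M * X * M) * Y := by simp [Matrix.mul_assoc]
    _ = M * Y := by rw [hX1]
  have hXM : X * M = Y * M := by
    calc X * M = (X * M)ᵀ := hX4.symm
    _ = Mᵀ * Xᵀ := by simp [Matrix.transpose_mul]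
    _ = (M * Y * M)ᵀ * Xᵀ := by rw [hY1]
    _ = (Y * M)ᵀ * ((X * M)ᵀ) := by simp [Matrix.transpose_mul, Matrix.mul_assoc]
    _ = (Y * M) * (X * M) := by rw [hX4, hY4]
    _ = Y * (M * X * M) := by simp [Matrix.mul_assoc]
    _ = Y * M := by rw [hX1]
  calc X = X * M * X := hX2.symm
  _ = X * (M * Y) := by rw [Matrix.mul_assoc, hMX]
  _ = (X * M) * Y := by rw [Matrix.mul_assoc]
  _ = (Y * M) * Y := by rw [hXM]
  _ = Y := hY2

/-- key identity: `Cᵀ * Mp * (C * Cᵀ) = Cᵀ` when `Mp` is the pseudoinverse of `C * Cᵀ`. -/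
lemma mp_fix {k j : Type*} [Fintype k] [Fintype j] (C : Matrix k j ℝ) (Mp : Matrix k k ℝ)
    (h : IsMoorePenrose (C * Cᵀ) Mp) : Cᵀ * (Mp * (C * Cᵀ)) = Cᵀ := by
  obtain ⟨h1, h2, h3, h4⟩ := h
  set M := C * Cᵀ with hM
  set F := Mp * M with hF
  have hFt : Fᵀ = F := h4
  have hMF : M * F = M := by rw [hF, ← Matrix.mul_assoc, h1]
  have hFM : F * M = M := by
    calc F * M = (Mᵀ * Fᵀ)ᵀ := by simp [Matrix.transpose_mul]
    _ = (M * F)ᵀ := by rw [hFt]; rw [hM]; simp [Matrix.transpose_mul]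
    _ = M := by rw [hMF, hM]; simp [Matrix.transpose_mul]
  have hE : (Cᵀ * F - Cᵀ)ᵀ * (Cᵀ * F - Cᵀ) = 0 := by
    have ht : (Cᵀ * F - Cᵀ)ᵀ = F * C - C := by
      simp [Matrix.transpose_sub, Matrix.transpose_mul, hFt]
    rw [ht, Matrix.sub_mul, Matrix.mul_sub, Matrix.mul_sub]
    have e1 : F * C * (Cᵀ * F) = M := by
      rw [show F * C * (Cᵀ * F) = F * (C * Cᵀ) * F from by simp [Matrix.mul_assoc],
        ← hM, hFM, hMF]
    have e2 : F * C * Cᵀ = M := by rw [Matrix.mul_assoc, ← hM, hFM]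
    have e3 : C * (Cᵀ * F) = M := by rw [← Matrix.mul_assoc, ← hM, hMF]
    rw [e1, e2, e3]
    simp [hM]
  have := tmse_zero hE
  have : Cᵀ * F = Cᵀ := by
    have h0 := sub_eq_zero.mp this
    exact h0
  rw [hF, hM] at this
  rw [← Matrix.mul_assoc] at this ⊢
  exact this

lemma dp_adj {k : Type*} [Fintype k] (M : Matrix k k ℝ) (x y : k → ℝ) :
    (M *ᵥ x) ⬝ᵥ y = x ⬝ᵥ (Mᵀ *ᵥ y) := by
  rw [Matrix.dotProduct_mulVec, Matrix.vecMul_transpose]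

lemma dp_proj {k : Type*} [Fintype k] {R : Matrix k k ℝ} (hs : Rᵀ = R) (hi : R * R = R)
    (v : k → ℝ) : (R *ᵥ v) ⬝ᵥ (R *ᵥ v) = v ⬝ᵥ (R *ᵥ v) := by
  rw [dp_adj, Matrix.mulVec_mulVec, hs, hi]

lemma dp_nonneg {k : Type*} [Fintype k] (v : k → ℝ) : 0 ≤ v ⬝ᵥ v :=
  Finset.sum_nonneg fun i _ => mul_self_nonneg _

lemma proj_facts {k j : Type*} [Fintype k] [Fintype j] (C : Matrix j k ℝ) (Np : Matrix j j ℝ)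
    (h : IsMoorePenrose (C * Cᵀ) Np) :
    (Cᵀ * Np * C)ᵀ = Cᵀ * Np * C ∧ (Cᵀ * Np * C) * (Cᵀ * Np * C) = Cᵀ * Np * C ∧
      (Cᵀ * Np * C) * Cᵀ = Cᵀ := by
  have hsym : Npᵀ = Np := by
    refine mp_unique ?_ h
    have := mp_transpose h
    rwa [show (C * Cᵀ)ᵀ = C * Cᵀ by simp [Matrix.transpose_mul]] at this
  refine ⟨?_, ?_, ?_⟩
  · simp [Matrix.transpose_mul, hsym, Matrix.mul_assoc]
  · have e : Cᵀ * Np * C * (Cᵀ * Np * C) = Cᵀ * (Np * (C * Cᵀ) * Np) * C := by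
      simp [Matrix.mul_assoc]
    rw [e, h.2.1]
  · have e : Cᵀ * Np * C * Cᵀ = Cᵀ * (Np * (C * Cᵀ)) := by simp [Matrix.mul_assoc]
    rw [e, mp_fix C Np h]

/-- comparison with unconstrained sketch-and-project. With
`Z` the constrained projector and `Z̃ = B^{−1/2} Aᵀ Sᵀ (S A B^{−1} Aᵀ Sᵀ)† S A B^{−1/2}`
the unconstrained one, `‖Z y‖₂ ≥ ‖Z̃ y‖₂` for every `y ∈ range(P B^{−1/2} Aᵀ)`;
in particular the error decrease with the subspace constraint is at least as large:
`‖Z B^{1/2}(x^k − x*)‖₂ ≥ ‖Z̃ B^{1/2}(x^k − x*)‖₂`. -/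
theorem stmt_4 {m n d l : ℕ}
    (A : Matrix (Fin m) (Fin n) ℝ) (b : Fin m → ℝ)
    (hconsistent : ∃ x, A *ᵥ x = b)
    (B : Matrix (Fin n) (Fin n) ℝ) (hB : B.PosDef)
    (Q : Matrix (Fin d) (Fin m) ℝ) (S : Matrix (Fin l) (Fin m) ℝ)
    -- `Bh = B^{1/2}` and `Bih = B^{-1/2}`
    (Bh : Matrix (Fin n) (Fin n) ℝ) (hBh : Bh = Matrix.PosSemidef.sqrt hB.posSemidef)
    (Bih : Matrix (Fin n) (Fin n) ℝ) (hBih : Bih = (Matrix.PosSemidef.sqrt hB.posSemidef)⁻¹)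
    -- `N1 = (Q A B^{-1/2})†` and `P = I - N1 (Q A B^{-1/2})`
    (N1 : Matrix (Fin n) (Fin d) ℝ) (hN1 : IsMoorePenrose (Q * A * Bih) N1)
    (P : Matrix (Fin n) (Fin n) ℝ) (hP : P = 1 - N1 * (Q * A * Bih))
    -- `N2 = (S A B^{-1/2} P B^{-1/2} Aᵀ Sᵀ)†` and the constrained projector `Z`
    (N2 : Matrix (Fin l) (Fin l) ℝ)
    (hN2 : IsMoorePenrose (S * A * Bih * P * Bih * Aᵀ * Sᵀ) N2)
    (Z : Matrix (Fin n) (Fin n) ℝ)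
    (hZ : Z = P * Bih * Aᵀ * Sᵀ * N2 * (S * A * Bih * P))
    -- `N3 = (S A B⁻¹ Aᵀ Sᵀ)†` and the unconstrained projector `Z̃`
    (N3 : Matrix (Fin l) (Fin l) ℝ)
    (hN3 : IsMoorePenrose (S * A * B⁻¹ * Aᵀ * Sᵀ) N3)
    (Ztil : Matrix (Fin n) (Fin n) ℝ)
    (hZtil : Ztil = Bih * Aᵀ * Sᵀ * N3 * (S * A * Bih))
    -- the iterate `xk` and the solution `x*`, with `B^{1/2}(xk − x*) ∈ range(P B^{-1/2} Aᵀ)`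
    (xk xstar : Fin n → ℝ)
    (hmem : ∃ u : Fin m → ℝ, Bh *ᵥ (xk - xstar) = (P * Bih * Aᵀ) *ᵥ u) :
    (∀ y : Fin n → ℝ, (∃ u : Fin m → ℝ, y = (P * Bih * Aᵀ) *ᵥ u) →
      Real.sqrt ((Ztil *ᵥ y) ⬝ᵥ (Ztil *ᵥ y)) ≤ Real.sqrt ((Z *ᵥ y) ⬝ᵥ (Z *ᵥ y))) ∧
    Real.sqrt ((Ztil *ᵥ (Bh *ᵥ (xk - xstar))) ⬝ᵥ (Ztil *ᵥ (Bh *ᵥ (xk - xstar)))) ≤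
      Real.sqrt ((Z *ᵥ (Bh *ᵥ (xk - xstar))) ⬝ᵥ (Z *ᵥ (Bh *ᵥ (xk - xstar)))) := by
  have hBihT : Bihᵀ = Bih := by
    have hsq : (Matrix.PosSemidef.sqrt hB.posSemidef)ᵀ = Matrix.PosSemidef.sqrt hB.posSemidef :=
      psd_sqrt_transpose hB.posSemidef
    rw [hBih, Matrix.transpose_nonsing_inv, hsq]
  have hBinv : B⁻¹ = Bih * Bih := by
    rw [hBih, ← Matrix.mul_inv_rev, psd_sqrt_mul_self hB.posSemidef]
  have hPt : Pᵀ = P := by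
    rw [hP, Matrix.transpose_sub, Matrix.transpose_one, hN1.2.2.2]
  have hPP : P * P = P := by
    have hFF : N1 * (Q * A * Bih) * (N1 * (Q * A * Bih)) = N1 * (Q * A * Bih) := by
      calc N1 * (Q * A * Bih) * (N1 * (Q * A * Bih))
          = N1 * (Q * A * Bih * N1 * (Q * A * Bih)) := by simp [Matrix.mul_assoc]
        _ = N1 * (Q * A * Bih) := by rw [hN1.1]
    rw [hP]
    simp only [Matrix.sub_mul, Matrix.mul_sub, Matrix.one_mul, Matrix.mul_one, hFF]
    abel
  have hCt : (S * A * Bih * P)ᵀ = P * Bih * Aᵀ * Sᵀ := by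
    simp [Matrix.transpose_mul, hPt, hBihT, Matrix.mul_assoc]
  have hDt : (S * A * Bih)ᵀ = Bih * Aᵀ * Sᵀ := by
    simp [Matrix.transpose_mul, hBihT, Matrix.mul_assoc]
  have hM2 : S * A * Bih * P * Bih * Aᵀ * Sᵀ = (S * A * Bih * P) * (S * A * Bih * P)ᵀ := by
    rw [hCt]
    calc S * A * Bih * P * Bih * Aᵀ * Sᵀ
        = S * A * Bih * (P * P) * Bih * Aᵀ * Sᵀ := by rw [hPP]
      _ = S * A * Bih * P * (P * Bih * Aᵀ * Sᵀ) := by simp [Matrix.mul_assoc]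
  have hM3 : S * A * B⁻¹ * Aᵀ * Sᵀ = (S * A * Bih) * (S * A * Bih)ᵀ := by
    rw [hDt, hBinv]; simp [Matrix.mul_assoc]
  have hN2' : IsMoorePenrose ((S * A * Bih * P) * (S * A * Bih * P)ᵀ) N2 := hM2 ▸ hN2
  have hN3' : IsMoorePenrose ((S * A * Bih) * (S * A * Bih)ᵀ) N3 := hM3 ▸ hN3
  have hZC : Z = (S * A * Bih * P)ᵀ * N2 * (S * A * Bih * P) := by
    rw [hZ, hCt]
  have hZtC : Ztil = (S * A * Bih)ᵀ * N3 * (S * A * Bih) := by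
    rw [hZtil, hDt]
  obtain ⟨hZsym', hZZ', hfix'⟩ := proj_facts (S * A * Bih * P) N2 hN2'
  obtain ⟨hZtsym', hZtZt', _⟩ := proj_facts (S * A * Bih) N3 hN3'
  have hZsym : Zᵀ = Z := by rw [hZC]; exact hZsym'
  have hZZ : Z * Z = Z := by rw [hZC]; exact hZZ'
  have hfix : Z * (S * A * Bih * P)ᵀ = (S * A * Bih * P)ᵀ := by rw [hZC]; exact hfix'
  have hZtsym : Ztilᵀ = Ztil := by rw [hZtC]; exact hZtsym'
  have hZtZt : Ztil * Ztil = Ztil := by rw [hZtC]; exact hZtZt'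
  -- Z * (P * Ztil) = P * Ztil
  have hPD : P * (S * A * Bih)ᵀ = (S * A * Bih * P)ᵀ := by
    rw [hDt, hCt]; simp [Matrix.mul_assoc]
  have hPZt : Z * (P * Ztil) = P * Ztil := by
    have e1 : P * Ztil = (S * A * Bih * P)ᵀ * (N3 * (S * A * Bih)) := by
      rw [hZtC, ← hPD]; simp [Matrix.mul_assoc]
    rw [e1, ← Matrix.mul_assoc, hfix]
  -- main inequality
  have key : ∀ y : Fin n → ℝ, (∃ u : Fin m → ℝ, y = (P * Bih * Aᵀ) *ᵥ u) →
      Real.sqrt ((Ztil *ᵥ y) ⬝ᵥ (Ztil *ᵥ y)) ≤ Real.sqrt ((Z *ᵥ y) ⬝ᵥ (Z *ᵥ y)) := by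
    rintro y ⟨u, hyu⟩
    have hPy : P *ᵥ y = y := by
      have e : P * (P * Bih * Aᵀ) = P * Bih * Aᵀ := by
        rw [← Matrix.mul_assoc, ← Matrix.mul_assoc, hPP]
      rw [hyu, Matrix.mulVec_mulVec, e]
    set a : Fin n → ℝ := Ztil *ᵥ y with ha
    set zz : Fin n → ℝ := (P * Ztil) *ᵥ y with hzz
    set w : Fin n → ℝ := y - a with hw
    have f1 : a ⬝ᵥ a = y ⬝ᵥ a := dp_proj hZtsym hZtZt y
    have f2 : (Z *ᵥ y) ⬝ᵥ (Z *ᵥ y) = y ⬝ᵥ (Z *ᵥ y) := dp_proj hZsym hZZ y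
    have hPw : (P *ᵥ w) ⬝ᵥ (P *ᵥ w) ≤ w ⬝ᵥ w := by
      have hQs : (1 - P)ᵀ = 1 - P := by rw [Matrix.transpose_sub, Matrix.transpose_one, hPt]
      have hQi : (1 - P) * (1 - P) = 1 - P := by
        simp only [Matrix.sub_mul, Matrix.mul_sub, Matrix.one_mul, Matrix.mul_one, hPP]
        abel
      have h1 := dp_proj hQs hQi w
      have h2 := dp_proj hPt hPP w
      rw [Matrix.sub_mulVec, Matrix.one_mulVec] at h1
      have h3 : 0 ≤ (w - P *ᵥ w) ⬝ᵥ (w - P *ᵥ w) := dp_nonneg _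
      rw [h1, dotProduct_sub] at h3
      rw [h2]
      linarith
    have hPwz : P *ᵥ w = y - zz := by
      rw [hw, Matrix.mulVec_sub, hPy, hzz, ha, Matrix.mulVec_mulVec]
    have hww : w ⬝ᵥ w = y ⬝ᵥ y - y ⬝ᵥ a := by
      rw [hw, sub_dotProduct, dotProduct_sub, dotProduct_sub, f1,
        dotProduct_comm a y]
      ring
    have hZzz : Z *ᵥ zz = zz := by
      rw [hzz, Matrix.mulVec_mulVec, hPZt]
    have hpyth : (y - Z *ᵥ y) ⬝ᵥ (y - Z *ᵥ y) ≤ (y - zz) ⬝ᵥ (y - zz) := by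
      have hsplit : y - zz = (y - Z *ᵥ y) + (Z *ᵥ y - zz) := by abel
      have hf : Z *ᵥ y - zz = Z *ᵥ (y - zz) := by rw [Matrix.mulVec_sub, hZzz]
      have hZe : Z *ᵥ (y - Z *ᵥ y) = 0 := by
        rw [Matrix.mulVec_sub, Matrix.mulVec_mulVec, hZZ, sub_self]
      have hcross : (y - Z *ᵥ y) ⬝ᵥ (Z *ᵥ y - zz) = 0 := by
        rw [hf, dotProduct_comm, dp_adj, hZsym, hZe, dotProduct_zero]
      have hcross' : (Z *ᵥ y - zz) ⬝ᵥ (y - Z *ᵥ y) = 0 := by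
        rw [dotProduct_comm]; exact hcross
      have hfnn : 0 ≤ (Z *ᵥ y - zz) ⬝ᵥ (Z *ᵥ y - zz) := dp_nonneg _
      calc (y - Z *ᵥ y) ⬝ᵥ (y - Z *ᵥ y)
          ≤ (y - Z *ᵥ y) ⬝ᵥ (y - Z *ᵥ y) + (Z *ᵥ y - zz) ⬝ᵥ (Z *ᵥ y - zz) := by linarith
        _ = (y - zz) ⬝ᵥ (y - zz) := by
            rw [hsplit, add_dotProduct, dotProduct_add, dotProduct_add,
              hcross, hcross']
            ring
    have hee : (y - Z *ᵥ y) ⬝ᵥ (y - Z *ᵥ y) = y ⬝ᵥ y - y ⬝ᵥ (Z *ᵥ y) := by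
      rw [sub_dotProduct, dotProduct_sub, dotProduct_sub, f2,
        dotProduct_comm (Z *ᵥ y) y]
      ring
    have hts : y ⬝ᵥ a ≤ y ⬝ᵥ (Z *ᵥ y) := by
      rw [hPwz] at hPw
      rw [hee] at hpyth
      rw [hww] at hPw
      linarith
    apply Real.sqrt_le_sqrt
    rw [f1, f2]
    exact hts
  exact ⟨key, key _ hmem⟩
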